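/- Let x ∈ g be a Nijenhuis element associated to an O-operator T : V → g, i.e. [[x,y],[x,z]] = 0 for all y,z ∈ g, ρ([x,y])∘ρ(x) = 0 for all y ∈ g, and [x, [Tu,x] + T(ρ(x)u)] = 0 for all u ∈ V. Then ρ(x) is a Nijenhuis operator on the pre-Lie algebra (V, ·_T), i.e. ρ(x)(u) ·_T ρ(x)(v) = ρ(x)(ρ(x)(u)·_T v + u·_T ρ(x)(v) − ρ(x)(u·_T v)) for all u,v ∈ V, where u·_T v = ρ(Tu)v. -/

import Mathlib

attribute [local instance 100] LieRing.ofAssociativeRing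

/-- If `x` is a Nijenhuis element associated to an O-operator `T`, then `ρ(x)`
is a Nijenhuis operator on the pre-Lie algebra `(V, ·_T)`. -/
theorem stmt9 {K : Type*} [Field K]
    {g : Type*} [LieRing g] [LieAlgebra K g]
    {V : Type*} [AddCommGroup V] [Module K V]
    (ρ : g →ₗ⁅K⁆ Module.End K V) (T : V →ₗ[K] g) (x : g)
    (hT : ∀ u v : V, ⁅T u, T v⁆ = T (ρ (T u) v - ρ (T v) u))
    (h1 : ∀ y z : g, ⁅⁅x, y⁆, ⁅x, z⁆⁆ = 0)
    (h2 : ∀ y : g, ∀ u : V, ρ ⁅x, y⁆ (ρ x u) = 0)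
    (h3 : ∀ u : V, ⁅x, ⁅T u, x⁆ + T (ρ x u)⁆ = 0) :
    ∀ u v : V,
      ρ (T (ρ x u)) (ρ x v)
        = ρ x (ρ (T (ρ x u)) v + ρ (T u) (ρ x v) - ρ x (ρ (T u) v)) := by
  intro u v
  have key : ⁅x, T (ρ x u)⁆ = ⁅x, ⁅x, T u⁆⁆ := by
    have h := h3 u
    rw [lie_add, ← lie_skew (T u) x, lie_neg, neg_add_eq_zero] at h
    exact h.symm
  have e1 : ρ ⁅x, T (ρ x u)⁆ v = ρ ⁅x, ⁅x, T u⁆⁆ v := by rw [key]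
  have h2' := h2 (T u) v
  simp only [LieHom.map_lie, Ring.lie_def, LinearMap.sub_apply, Module.End.mul_apply,
    map_add, map_sub] at e1 h2' ⊢
  rw [sub_eq_zero] at h2'
  rw [sub_eq_iff_eq_add] at e1
  rw [e1, h2']
  abel
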